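/- Every U-cycle is a T-cycle. Precisely: if x ∈ ℝ with x ≥ 1 and there exists l ∈ ℕ with l ≥ 1 such that U^l(x) = x, then x is a positive integer (so the cycle (x, U(x), …, U^l(x)) consists entirely of positive integers and is a cycle of the 3n+1 function T). -/
import Mathlib


/-- The real 3x+1 function: `Ux = x/2` if `⌊x⌋` is even, `(3x+1)/2` if `⌊x⌋` is odd. -/
noncomputable def U (x : ℝ) : ℝ := if Even ⌊x⌋ then x / 2 else (3 * x + 1) / 2

lemma U_fract_even (y : ℝ) (h : Even ⌊y⌋) :
    U y = y / 2 ∧ Int.fract (U y) = Int.fract y / 2 := by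
  have hU : U y = y / 2 := by simp [U, h]
  refine ⟨hU, ?_⟩
  obtain ⟨m, hm⟩ := h
  have h1 : ((⌊y⌋ : ℤ) : ℝ) = (m : ℝ) + m := by rw [hm]; push_cast; ring
  have hy : y = (m : ℝ) + m + Int.fract y := by
    linarith [Int.floor_add_fract y]
  have h2 : y / 2 = ((m : ℤ) : ℝ) + Int.fract y / 2 := by linarith
  rw [hU, h2, Int.fract_intCast_add]
  exact Int.fract_eq_self.mpr ⟨div_nonneg (Int.fract_nonneg y) (by norm_num), by linarith [Int.fract_lt_one y]⟩

lemma U_fract_odd (y : ℝ) (h : ¬ Even ⌊y⌋) :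
    U y = (3 * y + 1) / 2 ∧
    (Int.fract (U y) = 3 * Int.fract y / 2 ∨
     Int.fract (U y) = (3 * Int.fract y - 2) / 2) := by
  have hU : U y = (3 * y + 1) / 2 := by simp [U, h]
  refine ⟨hU, ?_⟩
  obtain ⟨m, hm⟩ := Int.not_even_iff_odd.mp h
  have hy : ((⌊y⌋ : ℤ) : ℝ) = 2 * m + 1 := by rw [hm]; push_cast; ring
  have hfl := Int.floor_add_fract y
  have hform : (3 * y + 1) / 2 = ((3 * m + 2 : ℤ) : ℝ) + 3 * Int.fract y / 2 := by
    push_cast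
    linarith
  have hf0 := Int.fract_nonneg y
  have hf1 := Int.fract_lt_one y
  rw [hU, hform, Int.fract_intCast_add]
  by_cases hc : 3 * Int.fract y / 2 < 1
  · left
    exact Int.fract_eq_self.mpr ⟨by positivity, hc⟩
  · right
    push_neg at hc
    have : 3 * Int.fract y / 2 = ((1 : ℤ) : ℝ) + (3 * Int.fract y - 2) / 2 := by
      push_cast; ring
    rw [this, Int.fract_intCast_add]
    exact Int.fract_eq_self.mpr ⟨by linarith, by linarith⟩

lemma U_key (x : ℝ) (k : ℕ) :
    ∃ A : ℕ, ∃ E D : ℝ, 0 ≤ E ∧ 0 ≤ D ∧ (A = 0 → E = 0) ∧ (1 ≤ A → 1 ≤ E) ∧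
      (2 : ℝ) ^ k * U^[k] x = 3 ^ A * x + E ∧
      (2 : ℝ) ^ k * Int.fract (U^[k] x) = 3 ^ A * Int.fract x - D := by
  induction k with
  | zero => exact ⟨0, 0, 0, le_refl _, le_refl _, fun _ => rfl,
      fun h => absurd h (by norm_num), by simp, by simp⟩
  | succ k ih =>
    obtain ⟨A, E, D, hE0, hD0, hAE, hAE1, hx, hf⟩ := ih
    set y := U^[k] x with hy
    rw [Function.iterate_succ_apply']
    by_cases h : Even ⌊y⌋
    · obtain ⟨hU, hUf⟩ := U_fract_even y h
      refine ⟨A, E, D, hE0, hD0, hAE, hAE1, ?_, ?_⟩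
      · rw [hU, pow_succ]; linarith
      · rw [hUf, pow_succ]; linarith
    · obtain ⟨hU, hUf⟩ := U_fract_odd y h
      have h2k : (1 : ℝ) ≤ 2 ^ k := one_le_pow₀ (by norm_num)
      rcases hUf with hUf | hUf
      · refine ⟨A + 1, 3 * E + 2 ^ k, 3 * D, by positivity, by positivity,
          fun h => absurd h (by omega), fun _ => by linarith, ?_, ?_⟩
        · rw [hU, pow_succ, pow_succ]; linarith
        · rw [hUf, pow_succ, pow_succ]; linarith
      · refine ⟨A + 1, 3 * E + 2 ^ k, 3 * D + 2 ^ (k + 1), by positivity, by positivity,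
          fun h => absurd h (by omega), fun _ => by linarith, ?_, ?_⟩
        · rw [hU, pow_succ, pow_succ]; linarith
        · rw [hUf, pow_succ, pow_succ]; linarith

/-- Every `U`-cycle is a `T`-cycle: any real `x ≥ 1` with `U^[l] x = x` for some `l ≥ 1`
is a positive integer. -/
theorem U_cycles_are_T_cycles (x : ℝ) (hx : 1 ≤ x) (l : ℕ) (hl : 1 ≤ l)
    (hcyc : U^[l] x = x) : ∃ n : ℕ, 0 < n ∧ x = n := by
  obtain ⟨A, E, D, hE0, hD0, hAE, hAE1, hxeq, hfeq⟩ := U_key x l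
  rw [hcyc] at hxeq hfeq
  have hxpos : (0 : ℝ) < x := lt_of_lt_of_le one_pos hx
  have h2l : (2 : ℝ) ≤ 2 ^ l := by
    calc (2 : ℝ) = 2 ^ 1 := (pow_one 2).symm
    _ ≤ 2 ^ l := pow_le_pow_right₀ (by norm_num) hl
  -- A ≥ 1
  have hA : 1 ≤ A := by
    by_contra hA
    have hA0 : A = 0 := by omega
    rw [hA0, hAE hA0] at hxeq
    simp at hxeq
    nlinarith
  have hE1 : 1 ≤ E := hAE1 hA
  -- 2^l > 3^A
  have hgt : (3 : ℝ) ^ A < 2 ^ l := by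
    have : (3 : ℝ) ^ A * x < 2 ^ l * x := by linarith
    exact lt_of_mul_lt_mul_right this hxpos.le
  -- fractional part is zero
  have hf0 := Int.fract_nonneg x
  have hfrac : Int.fract x = 0 := by nlinarith
  -- conclude
  have hfloor : x = (⌊x⌋ : ℝ) := by
    have := Int.floor_add_fract x
    linarith
  have hfl1 : 1 ≤ ⌊x⌋ := by exact_mod_cast Int.le_floor.mpr (by exact_mod_cast hx)
  refine ⟨⌊x⌋.toNat, by omega, ?_⟩
  have hcast : ((⌊x⌋.toNat : ℕ) : ℝ) = ((⌊x⌋ : ℤ) : ℝ) := by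
    exact_mod_cast Int.toNat_of_nonneg (by omega : (0:ℤ) ≤ ⌊x⌋)
  rw [hcast]; exact hfloor
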